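/- Under hypothesis (H1), if k ∈ -core 0⁺A then φ_{A,k} is finite-valued on all of Y, {y : φ_{A,k}(y) < t} = tk + core A for all t ∈ ℝ, and φ_{A,k}(y⁰) - φ_{A,k}(y¹) ≤ φ_{0⁺A,k}(y⁰ - y¹) for all y⁰, y¹ ∈ Y. -/

import Mathlib

open Set Pointwise

noncomputable def phiF {Y : Type*} [AddCommGroup Y] [Module ℝ Y] (A : Set Y) (k : Y) (y : Y) : EReal :=
  sInf ((fun t : ℝ => (t : EReal)) '' {t : ℝ | y - t • k ∈ A})

def recCone {Y : Type*} [AddCommGroup Y] [Module ℝ Y] (A : Set Y) : Set Y :=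
  {u | ∀ a ∈ A, ∀ t : ℝ, 0 ≤ t → a + t • u ∈ A}

def algInterior {Y : Type*} [AddCommGroup Y] [Module ℝ Y] (C : Set Y) : Set Y :=
  {x ∈ C | ∀ y : Y, ∃ ε : ℝ, 0 < ε ∧ ∀ t : ℝ, 0 ≤ t → t ≤ ε → x + t • y ∈ C}

theorem stmt_15 {Y : Type*} [AddCommGroup Y] [Module ℝ Y] [TopologicalSpace Y]
    [IsTopologicalAddGroup Y] [ContinuousSMul ℝ Y]
    (A : Set Y) (hAc : IsClosed A) (hAne : A.Nonempty) (hAp : A ≠ Set.univ)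
    (k : Y) (hk : k ≠ 0) (hrec : ∀ a ∈ A, ∀ t : ℝ, 0 ≤ t → a - t • k ∈ A)
    (hcore : -k ∈ algInterior (recCone A)) :
    (∀ y : Y, phiF A k y ≠ ⊤ ∧ phiF A k y ≠ ⊥) ∧
    (∀ t : ℝ, {y | phiF A k y < (t : EReal)} = {y | y - t • k ∈ algInterior A}) ∧
    (∀ y₀ y₁ : Y, phiF A k y₀ - phiF A k y₁ ≤ phiF (recCone A) k (y₀ - y₁)) := by
  obtain ⟨hkrec, hkcore⟩ := hcore
  -- The sublevel sets are nonempty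
  have hne : ∀ y : Y, ∃ t : ℝ, y - t • k ∈ A := by
    intro y
    obtain ⟨a, ha⟩ := hAne
    obtain ⟨ε, hε, h⟩ := hkcore (y - a)
    have hu : -k + ε • (y - a) ∈ recCone A := h ε hε.le le_rfl
    have hmem := hu a ha (1 / ε) (by positivity)
    have he : a + (1 / ε) • (-k + ε • (y - a)) = y - (1 / ε) • k := by
      match_scalars <;> field_simp <;> ring
    rw [he] at hmem
    exact ⟨1 / ε, hmem⟩
  -- upward closedness
  have hup : ∀ y : Y, ∀ s t : ℝ, s ≤ t → y - s • k ∈ A → y - t • k ∈ A := by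
    intro y s t hst hs
    have hmem := hrec _ hs (t - s) (by linarith)
    have he : y - s • k - (t - s) • k = y - t • k := by module
    rwa [he] at hmem
  -- bounded below
  have hbdd : ∀ y : Y, ∃ r : ℝ, ∀ t : ℝ, y - t • k ∈ A → r ≤ t := by
    intro y
    by_contra h
    push_neg at h
    have hall : ∀ t : ℝ, y - t • k ∈ A := by
      intro t
      obtain ⟨s, hs, hst⟩ := h t
      exact hup y s t hst.le hs
    apply hAp
    ext z
    simp only [Set.mem_univ, iff_true]
    obtain ⟨ε, hε, hd⟩ := hkcore (z - y)
    have hu : -k + ε • (z - y) ∈ recCone A := hd ε hε.le le_rfl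
    have ha : y - (-(1 / ε)) • k ∈ A := hall _
    have hmem := hu _ ha (1 / ε) (by positivity)
    have he : y - (-(1 / ε)) • k + (1 / ε) • (-k + ε • (z - y)) = z := by
      match_scalars <;> field_simp <;> ring
    rwa [he] at hmem
  -- finiteness
  have hfin : ∀ y : Y, phiF A k y ≠ ⊤ ∧ phiF A k y ≠ ⊥ := by
    intro y
    obtain ⟨t, ht⟩ := hne y
    obtain ⟨r, hr⟩ := hbdd y
    have hle : phiF A k y ≤ (t : EReal) := sInf_le ⟨t, ht, rfl⟩
    have hge : (r : EReal) ≤ phiF A k y := by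
      apply le_sInf
      rintro x ⟨s, hs, rfl⟩
      exact EReal.coe_le_coe_iff.mpr (hr s hs)
    constructor
    · intro h
      rw [h] at hle
      exact (EReal.coe_lt_top t).not_ge hle
    · intro h
      rw [h] at hge
      exact (EReal.bot_lt_coe r).not_ge hge
  have hlt : ∀ (y : Y) (t : ℝ), phiF A k y < (t : EReal) ↔ ∃ s : ℝ, s < t ∧ y - s • k ∈ A := by
    intro y t
    constructor
    · intro h
      rw [phiF, sInf_lt_iff] at h
      obtain ⟨x, ⟨s, hs, rfl⟩, hx⟩ := h
      exact ⟨s, EReal.coe_lt_coe_iff.mp hx, hs⟩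
    · rintro ⟨s, hst, hs⟩
      calc phiF A k y ≤ (s : EReal) := sInf_le ⟨s, hs, rfl⟩
        _ < (t : EReal) := by exact_mod_cast hst
  refine ⟨hfin, ?_, ?_⟩
  · -- sublevel sets are translates of the algebraic interior
    intro t
    ext y
    simp only [Set.mem_setOf_eq, hlt]
    constructor
    · rintro ⟨s, hst, hs⟩
      have hδ0 : 0 < t - s := by linarith
      have hmem : y - t • k ∈ A := by
        have h1 := hkrec _ hs (t - s) hδ0.le
        have he : y - s • k + (t - s) • (-k) = y - t • k := by module
        rwa [he] at h1
      refine ⟨hmem, fun d => ?_⟩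
      obtain ⟨ε, hε, hd⟩ := hkcore d
      refine ⟨(t - s) * ε, by positivity, fun σ hσ0 hσε => ?_⟩
      have hτ : -k + (σ / (t - s)) • d ∈ recCone A :=
        hd (σ / (t - s)) (by positivity) (by rw [div_le_iff₀ hδ0]; linarith)
      have h2 := hτ _ hs (t - s) hδ0.le
      have he : y - s • k + (t - s) • (-k + (σ / (t - s)) • d) = y - t • k + σ • d := by
        match_scalars <;> (try field_simp) <;> ring
      rwa [he] at h2
    · rintro ⟨hmem, hint⟩
      obtain ⟨ε, hε, hd⟩ := hint k
      have h1 := hd ε hε.le le_rfl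
      have he : y - t • k + ε • k = y - (t - ε) • k := by module
      rw [he] at h1
      exact ⟨t - ε, by linarith, h1⟩
  · -- translation property
    intro y₀ y₁
    obtain ⟨h0t, h0b⟩ := hfin y₀
    obtain ⟨h1t, h1b⟩ := hfin y₁
    set q₀ := (phiF A k y₀).toReal with hq₀
    set q₁ := (phiF A k y₁).toReal with hq₁
    have e₀ : phiF A k y₀ = (q₀ : EReal) := (EReal.coe_toReal h0t h0b).symm
    have e₁ : phiF A k y₁ = (q₁ : EReal) := (EReal.coe_toReal h1t h1b).symm
    rw [e₀, e₁, ← EReal.coe_sub]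
    apply le_sInf
    rintro x ⟨s, hs, rfl⟩
    have key : ∀ r : ℝ, y₁ - r • k ∈ A → q₀ ≤ r + s := by
      intro r hr
      have h1 := hs _ hr 1 zero_le_one
      have he : y₁ - r • k + (1 : ℝ) • (y₀ - y₁ - s • k) = y₀ - (r + s) • k := by module
      rw [he] at h1
      have h2 : phiF A k y₀ ≤ ((r + s : ℝ) : EReal) := sInf_le ⟨r + s, h1, rfl⟩
      rw [e₀] at h2
      exact_mod_cast h2
    have h3 : ((q₀ - s : ℝ) : EReal) ≤ phiF A k y₁ := by
      apply le_sInf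
      rintro x ⟨r, hr, rfl⟩
      have := key r hr
      exact EReal.coe_le_coe_iff.mpr (by linarith : q₀ - s ≤ r)
    rw [e₁] at h3
    have h4 : q₀ - s ≤ q₁ := by exact_mod_cast h3
    exact EReal.coe_le_coe_iff.mpr (by linarith : q₀ - q₁ ≤ s)
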